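/- arXiv:2210.15788 — 4 statements merged into one kernel-verified Lean document; each statement's English description precedes it below -/
import Mathlib

section
/- Let A be a commutative monoid and B a commutative ring. Let f : A → B be a polynomial map of degree ≤ n (n ≥ 0) and let g : A → B be an additive monoid homomorphism. Then the pointwise product f·g : A → B, x ↦ f(x)·g(x), is a polynomial map of degree ≤ n + 1. Moreover, if A is a commutative ring and both f and g are multiplicative, then f·g is multiplicative. -/
/-- Auxiliary inductive definition: `IsPolyDegAux n P` says that `P` is a polynomial map of
degree `≤ n - 1` (so `IsPolyDegAux 0 P` means `P = 0`, i.e. degree `≤ -1`). -/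
def IsPolyDegAux {A : Type*} [AddCommMonoid A] {B : Type*} [AddCommGroup B] :
    ℕ → (A → B) → Prop
  | 0 => fun P => ∀ x, P x = 0
  | n + 1 => fun P => ∀ x : A, IsPolyDegAux n (fun y => P (x + y) - P y)

/-- `P : A → B` is a polynomial map of degree `≤ n`, for an integer `n ≥ -1`. -/
def IsPolyMapOfDegLE {A : Type*} [AddCommMonoid A] {B : Type*} [AddCommGroup B]
    (n : ℤ) (P : A → B) : Prop :=
  IsPolyDegAux (n + 1).toNat P

/-- A map between commutative rings is multiplicative if it sends `1` to `1` and
products to products. -/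
def IsMultiplicativeMap {A : Type*} [CommRing A] {B : Type*} [CommRing B]
    (P : A → B) : Prop :=
  P 1 = 1 ∧ ∀ x y : A, P (x * y) = P x * P y

section Aux

variable {A : Type*} [AddCommMonoid A] {B : Type*} [AddCommGroup B]

lemma isPolyDegAux_congr (n : ℕ) {P Q : A → B} (h : ∀ x, P x = Q x)
    (hP : IsPolyDegAux n P) : IsPolyDegAux n Q := by
  have : P = Q := funext h
  rwa [← this]

lemma isPolyDegAux_add : ∀ (n : ℕ) {P Q : A → B}, IsPolyDegAux n P → IsPolyDegAux n Q →
    IsPolyDegAux n (fun x => P x + Q x)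
  | 0, P, Q, hP, hQ => fun x => by simp [hP x, hQ x]
  | n + 1, P, Q, hP, hQ => fun x => by
    refine isPolyDegAux_congr n (fun y => ?_) (isPolyDegAux_add n (hP x) (hQ x))
    exact sub_add_sub_comm _ _ _ _

lemma isPolyDegAux_shift : ∀ (n : ℕ) {P : A → B}, IsPolyDegAux n P →
    ∀ a : A, IsPolyDegAux n (fun y => P (a + y))
  | 0, P, hP, a => fun x => hP _
  | n + 1, P, hP, a => fun x => by
    refine isPolyDegAux_congr n (fun y => ?_) (isPolyDegAux_shift n (hP x) a)
    simp [add_left_comm]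

lemma isPolyDegAux_mul_const {B : Type*} [CommRing B] :
    ∀ (n : ℕ) {P : A → B} (c : B), IsPolyDegAux n P →
      IsPolyDegAux n (fun x => P x * c)
  | 0, P, c, hP => fun x => by simp [hP x]
  | n + 1, P, c, hP => fun x => by
    refine isPolyDegAux_congr n (fun y => ?_) (isPolyDegAux_mul_const n c (hP x))
    ring

lemma isPolyDegAux_mul_hom {B : Type*} [CommRing B] :
    ∀ (n : ℕ) (f : A → B) (g : A →+ B), IsPolyDegAux n f →
      IsPolyDegAux (n + 1) (fun x => f x * g x)
  | 0, f, g, hf => fun x y => by simp [hf (x + y), hf y]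
  | n + 1, f, g, hf => fun x => by
    have h1 : IsPolyDegAux (n + 1) (fun y => f (x + y) * g x) :=
      isPolyDegAux_mul_const (n + 1) (g x) (isPolyDegAux_shift (n + 1) hf x)
    have h2 : IsPolyDegAux (n + 1) (fun y => (f (x + y) - f y) * g y) :=
      isPolyDegAux_mul_hom n _ g (hf x)
    refine isPolyDegAux_congr (n + 1) (fun y => ?_) (isPolyDegAux_add (n + 1) h1 h2)
    simp only [map_add]
    ring

end Aux

/-- If `f : A → B` is a polynomial map of degree `≤ n` (with `A` a commutative monoid and
`B` a commutative ring) and `g : A → B` is an additive monoid homomorphism, then the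
pointwise product `x ↦ f x * g x` is a polynomial map of degree `≤ n + 1`.  Moreover, if
`A` is a commutative ring and both `f` and `g` are multiplicative, then the pointwise
product is multiplicative. -/
theorem isPolyMapOfDegLE_mul_addMonoidHom :
    (∀ (A : Type*) [AddCommMonoid A] (B : Type*) [CommRing B]
        (n : ℕ) (f : A → B) (g : A →+ B),
        IsPolyMapOfDegLE (n : ℤ) f →
        IsPolyMapOfDegLE ((n : ℤ) + 1) (fun x => f x * g x)) ∧
    (∀ (A : Type*) [CommRing A] (B : Type*) [CommRing B]
        (n : ℕ) (f : A → B) (g : A →+ B),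
        IsPolyMapOfDegLE (n : ℤ) f →
        IsMultiplicativeMap f → IsMultiplicativeMap (⇑g) →
        IsMultiplicativeMap (fun x => f x * g x)) := by
  constructor
  · intro A _ B _ n f g hf
    unfold IsPolyMapOfDegLE at *
    have h1 : ((n : ℤ) + 1).toNat = n + 1 := by omega
    have h2 : ((n : ℤ) + 1 + 1).toNat = n + 2 := by omega
    rw [h1] at hf
    rw [h2]
    exact isPolyDegAux_mul_hom (n + 1) f g hf
  · intro A _ B _ n f g _ hf hg
    refine ⟨by simp [hf.1, hg.1], fun x y => ?_⟩
    simp only [hf.2 x y, hg.2 x y]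
    ring
end

section
/- Let A and B be commutative rings and let g₁, …, g_n : A → B be ring homomorphisms (n ≥ 1). Then the pointwise product g : A → B, x ↦ g₁(x)·g₂(x)⋯g_n(x), is a multiplicative polynomial map of degree ≤ n. -/
section Aux

variable {A : Type*} [AddCommMonoid A] {B : Type*} [AddCommGroup B]

lemma aux_congr {n : ℕ} {P Q : A → B} (h : ∀ x, P x = Q x) :
    IsPolyDegAux n P → IsPolyDegAux n Q := by
  induction n generalizing P Q with
  | zero => intro hP x; rw [← h]; exact hP x
  | succ n ih => intro hP x; exact ih (fun y => by rw [h, h]) (hP x)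

lemma aux_succ {n : ℕ} {P : A → B} (h : IsPolyDegAux n P) : IsPolyDegAux (n + 1) P := by
  induction n generalizing P with
  | zero => intro x; intro y; simp [h (x + y), h y]
  | succ n ih => intro x; exact ih (h x)

lemma aux_le {m n : ℕ} (hmn : m ≤ n) {P : A → B} (h : IsPolyDegAux m P) :
    IsPolyDegAux n P := by
  induction hmn with
  | refl => exact h
  | step _ ih => exact aux_succ ih

lemma aux_zero {n : ℕ} : IsPolyDegAux n (fun _ : A => (0 : B)) := by
  cases n with
  | zero => intro x; rfl
  | succ n => exact aux_le (Nat.zero_le _) (fun x : A => rfl)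

lemma aux_add {n : ℕ} {P Q : A → B} (hP : IsPolyDegAux n P) (hQ : IsPolyDegAux n Q) :
    IsPolyDegAux n (fun x => P x + Q x) := by
  induction n generalizing P Q with
  | zero => intro x; show P x + Q x = 0; rw [hP x, hQ x, add_zero]
  | succ n ih =>
    intro x
    exact aux_congr (fun y => by exact sub_add_sub_comm _ _ _ _) (ih (hP x) (hQ x))

lemma aux_sum {ι : Type*} {n : ℕ} (s : Finset ι) (F : ι → A → B)
    (h : ∀ i ∈ s, IsPolyDegAux n (F i)) :
    IsPolyDegAux n (fun x => ∑ i ∈ s, F i x) := by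
  classical
  induction s using Finset.induction_on with
  | empty => exact aux_congr (fun x => by simp) aux_zero
  | @insert a s ha ih =>
    refine aux_congr (fun x => ?_) (aux_add (h a (by simp)) (ih fun i hi => h i (by simp [hi])))
    rw [Finset.sum_insert ha]

end Aux

section Key

variable {A : Type*} [CommRing A] {B : Type*} [CommRing B] {ι : Type*}

lemma aux_key (g : ι → (A →+* B)) (S : Finset ι) :
    ∀ c : B, IsPolyDegAux (S.card + 1) (fun y => c * ∏ i ∈ S, g i y) := by
  classical
  induction S using Finset.strongInduction with
  | _ S ih =>
    intro c x
    have key1 : ∀ y, c * ∏ i ∈ S, g i (x + y) - c * ∏ i ∈ S, g i y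
        = ∑ T ∈ S.powerset.erase S,
            (c * ∏ i ∈ S \ T, g i x) * ∏ i ∈ T, g i y := by
      intro y
      have h1 : ∀ i ∈ S, g i (x + y) = g i y + g i x := fun i _ => by
        rw [map_add, add_comm]
      rw [Finset.prod_congr rfl h1, Finset.prod_add]
      rw [← Finset.sum_erase_add _ _ (Finset.mem_powerset_self S)]
      simp only [Finset.sdiff_self, Finset.prod_empty, mul_one, mul_add, Finset.mul_sum]
      rw [add_sub_cancel_right]
      exact Finset.sum_congr rfl fun T hT => by ring
    refine aux_congr (fun y => (key1 y).symm) ?_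
    refine aux_sum _ _ fun T hT => ?_
    have hTS : T ⊂ S := by
      rw [Finset.mem_erase, Finset.mem_powerset] at hT
      exact lt_of_le_of_ne hT.2 hT.1
    exact aux_le (Nat.succ_le_of_lt (Finset.card_lt_card hTS)) (ih T hTS _)

end Key

/-- The pointwise product of `n ≥ 1` ring homomorphisms `g₁, …, gₙ : A → B` between
commutative rings is a multiplicative polynomial map of degree `≤ n`. -/
theorem isPolyMapOfDegLE_prod_ringHom {A : Type*} [CommRing A] {B : Type*} [CommRing B]
    (n : ℕ) (hn : 1 ≤ n) (g : Fin n → (A →+* B)) :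
    IsPolyMapOfDegLE (n : ℤ) (fun x => ∏ i, g i x) ∧
      IsMultiplicativeMap (fun x => ∏ i, g i x) := by
  constructor
  · have h := aux_key g Finset.univ 1
    simp only [one_mul, Finset.card_univ, Fintype.card_fin] at h
    unfold IsPolyMapOfDegLE
    have : ((n : ℤ) + 1).toNat = n + 1 := by omega
    rw [this]
    exact h
  · refine ⟨by simp, fun x y => ?_⟩
    simp [map_mul, Finset.prod_mul_distrib]
end

section
/- Let k be a field of characteristic 0 and K/k a finite Galois extension with Galois group Γ = Gal(K/k). Let V be a finite-dimensional K-vector space equipped with a semilinear action ρ of Γ, and let B : V × V → K be a nondegenerate symmetric K-bilinear form which is Galois compatible, i.e. B(ρ_σ(v), ρ_σ(w)) = σ(B(v, w)) for all σ ∈ Γ and v, w ∈ V. Let V^Γ = {v ∈ V : ρ_σ(v) = v for all σ ∈ Γ}, a k-subspace of V. Then B(v, w) lies in k (i.e. in the image of k in K) for all v, w ∈ V^Γ, and the induced symmetric k-bilinear form on V^Γ is nondegenerate. -/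
/-- Let `k` be a field of characteristic `0`, `K/k` a finite Galois extension with Galois
group `Γ = Gal(K/k)`, `V` a finite-dimensional `K`-vector space with a semilinear action
`ρ` of `Γ`, and `B` a nondegenerate symmetric Galois-compatible `K`-bilinear form on `V`.
Then on the `k`-subspace `V^Γ` of `Γ`-fixed vectors, `B` takes values in (the image of)
`k`, and the induced symmetric `k`-bilinear form on `V^Γ` is nondegenerate. -/
theorem galois_descent_bilinear_fixed
    {k K : Type*} [Field k] [CharZero k] [Field K] [Algebra k K]
    [IsGalois k K] [FiniteDimensional k K]
    {V : Type*} [AddCommGroup V] [Module K V] [FiniteDimensional K V]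
    (ρ : (K ≃ₐ[k] K) → V → V)
    (hadd : ∀ σ u v, ρ σ (u + v) = ρ σ u + ρ σ v)
    (hsmul : ∀ σ (c : K) (v : V), ρ σ (c • v) = σ c • ρ σ v)
    (hmul : ∀ σ τ v, ρ (σ * τ) v = ρ σ (ρ τ v))
    (hone : ∀ v, ρ 1 v = v)
    (B : V →ₗ[K] V →ₗ[K] K)
    (hsymm : ∀ v w, B v w = B w v)
    (hnd : ∀ v : V, v ≠ 0 → ∃ w, B v w ≠ 0)
    (hcompat : ∀ σ v w, B (ρ σ v) (ρ σ w) = σ (B v w)) :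
    (∀ v w : V, (∀ σ, ρ σ v = v) → (∀ σ, ρ σ w = w) →
        ∃ c : k, B v w = algebraMap k K c) ∧
    (∀ v : V, (∀ σ, ρ σ v = v) → v ≠ 0 →
        ∃ w : V, (∀ σ, ρ σ w = w) ∧ B v w ≠ 0) := by
  constructor
  · intro v w hv hw
    have hfix : (B v w) ∈ (⊥ : IntermediateField k K) := by
      rw [← IsGalois.fixedField_fixingSubgroup (⊥ : IntermediateField k K)]
      intro σ
      have := hcompat σ v w
      rw [hv σ, hw σ] at this
      exact this.symm
    rcases IntermediateField.mem_bot.mp hfix with ⟨c, hc⟩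
    exact ⟨c, hc.symm⟩
  · intro v hv hv0
    obtain ⟨w, hw⟩ := hnd v hv0
    set a := B v w with ha
    set u : V := ∑ σ : K ≃ₐ[k] K, ρ σ (a⁻¹ • w) with hu
    have hsum : ∀ τ (f : (K ≃ₐ[k] K) → V),
        ρ τ (∑ σ : K ≃ₐ[k] K, f σ) = ∑ σ : K ≃ₐ[k] K, ρ τ (f σ) := by
      intro τ f
      classical
      induction (Finset.univ : Finset (K ≃ₐ[k] K)) using Finset.induction_on with
      | empty =>
        simp only [Finset.sum_empty]
        have := hsmul τ 0 0
        simpa using this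
      | insert _ _ h ih =>
        rw [Finset.sum_insert h, Finset.sum_insert h, hadd, ih]
    refine ⟨u, ?_, ?_⟩
    · intro τ
      rw [hu, hsum τ]
      exact Fintype.sum_equiv (Equiv.mulLeft τ) _ _
        (fun σ => by simp [← hmul])
    · have hBvu : B v u = (Fintype.card (K ≃ₐ[k] K) : K) := by
        rw [hu, map_sum]
        have : ∀ σ : K ≃ₐ[k] K, B v (ρ σ (a⁻¹ • w)) = 1 := by
          intro σ
          calc B v (ρ σ (a⁻¹ • w)) = B (ρ σ v) (ρ σ (a⁻¹ • w)) := by rw [hv σ]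
          _ = σ (B v (a⁻¹ • w)) := hcompat σ _ _
          _ = σ 1 := by rw [map_smul, smul_eq_mul, ← ha, inv_mul_cancel₀ hw]
          _ = 1 := map_one σ
        simp [this]
      rw [hBvu]
      have : CharZero K := charZero_of_injective_algebraMap (algebraMap k K).injective
      exact_mod_cast Fintype.card_ne_zero
end

section
/- Let k be a field of characteristic 0 and K/k a finite Galois extension with Galois group Γ = Gal(K/k). Let V be a finite-dimensional K-vector space equipped with a semilinear action ρ of Γ, and let B : V × V → K be a nondegenerate symmetric K-bilinear form which is Galois compatible, i.e. B(ρ_σ(v), ρ_σ(w)) = σ(B(v, w)) for all σ ∈ Γ and v, w ∈ V. Let V^Γ be the k-subspace of Γ-fixed vectors, with its induced k-valued symmetric bilinear form B₀ = B|_{V^Γ}. Then the natural K-linear map V^Γ ⊗_k K → V, v ⊗ λ ↦ λ • v, is an isomorphism of K-vector spaces, and it carries the base change of B₀ to K (the K-bilinear form with (v ⊗ λ, w ⊗ μ) ↦ λμ·B₀(v, w)) to the form B. In particular, every finite-dimensional nondegenerate Galois-compatible symmetric bilinear form over K arises, up to compatible isomorphism, as the base change of a nondegenerate symmetric bilinear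 form over k. -/
open scoped TensorProduct

/-- The `k`-subspace of fixed vectors of a semilinear Galois action. -/
def fixedSubmodule {k K V : Type*} [Field k] [Field K] [Algebra k K]
    [AddCommGroup V] [Module K V] [Module k V] [IsScalarTower k K V]
    (ρ : (K ≃ₐ[k] K) → V → V)
    (hadd : ∀ σ u v, ρ σ (u + v) = ρ σ u + ρ σ v)
    (hsmul : ∀ σ (c : K) (v : V), ρ σ (c • v) = σ c • ρ σ v) :
    Submodule k V where
  carrier := {v | ∀ σ, ρ σ v = v}
  add_mem' := fun hu hv σ => by rw [hadd, hu σ, hv σ]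
  zero_mem' := fun σ => by simpa using hsmul σ 0 0
  smul_mem' := fun c v hv σ => by
    rw [← algebraMap_smul K c v, hsmul, AlgEquiv.commutes, hv σ]

/-- Galois descent for nondegenerate symmetric Galois-compatible bilinear forms: the
natural map `V^Γ ⊗_k K → V`, `v ⊗ λ ↦ λ • v`, is a `K`-linear isomorphism, carrying the
base change of the restricted `k`-bilinear form `B₀` on `V^Γ` to `B`. -/
theorem galois_descent_bilinear_baseChange
    {k K : Type*} [Field k] [CharZero k] [Field K] [Algebra k K]
    [IsGalois k K] [FiniteDimensional k K]
    {V : Type*} [AddCommGroup V] [Module K V] [Module k V] [IsScalarTower k K V]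
    [FiniteDimensional K V]
    (ρ : (K ≃ₐ[k] K) → V → V)
    (hadd : ∀ σ u v, ρ σ (u + v) = ρ σ u + ρ σ v)
    (hsmul : ∀ σ (c : K) (v : V), ρ σ (c • v) = σ c • ρ σ v)
    (hmul : ∀ σ τ v, ρ (σ * τ) v = ρ σ (ρ τ v))
    (hone : ∀ v, ρ 1 v = v)
    (B : V →ₗ[K] V →ₗ[K] K)
    (hsymm : ∀ v w, B v w = B w v)
    (hnd : ∀ v : V, v ≠ 0 → ∃ w, B v w ≠ 0)
    (hcompat : ∀ σ v w, B (ρ σ v) (ρ σ w) = σ (B v w)) :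
    ∃ e : (K ⊗[k] ↥(fixedSubmodule ρ hadd hsmul)) ≃ₗ[K] V,
      (∀ (c : K) (v : fixedSubmodule ρ hadd hsmul), e (c ⊗ₜ[k] v) = c • (v : V)) ∧
      ∀ (c d : K) (v w : fixedSubmodule ρ hadd hsmul),
        B (e (c ⊗ₜ[k] v)) (e (d ⊗ₜ[k] w)) = c * d * B (v : V) (w : V) := by
  classical
  set W : Submodule k V := fixedSubmodule ρ hadd hsmul with hWdef
  haveI : FiniteDimensional k V := Module.Finite.trans K V
  -- ρ σ as an additive monoid hom
  have hρ0 : ∀ σ : K ≃ₐ[k] K, ρ σ 0 = 0 := fun σ => by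
    simpa using hsmul σ 0 0
  let A : (K ≃ₐ[k] K) → V →+ V := fun σ => AddMonoidHom.mk' (ρ σ) (hadd σ)
  have hAapp : ∀ σ v, A σ v = ρ σ v := fun _ _ => rfl
  have hfix : ∀ σ (w : W), ρ σ (w : V) = (w : V) := fun σ w => w.2 σ
  -- averaging lands in W
  have hyW : ∀ (c : K) (v : V), (∑ σ : K ≃ₐ[k] K, σ c • ρ σ v) ∈ W := by
    intro c v τ
    rw [← hAapp, map_sum]
    rw [← Fintype.sum_equiv (Equiv.mulLeft τ)
      (fun σ => A τ (σ c • ρ σ v)) (fun σ => σ c • ρ σ v)]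
    intro σ
    rw [hAapp, hsmul]
    simp only [Equiv.coe_mulLeft, AlgEquiv.mul_apply, hmul]
  -- a k-basis of W
  let b : Module.Basis (Fin (Module.finrank k W)) k W := Module.finBasis k W
  -- linear independence over K of the basis vectors of W, inside V
  have hLI : LinearIndependent K (fun i => ((b i : W) : V)) := by
    rw [Fintype.linearIndependent_iff]
    intro g hg
    -- apply ρ σ to the relation
    have h1 : ∀ σ : K ≃ₐ[k] K, (∑ i, σ (g i) • ((b i : W) : V)) = 0 := by
      intro σ
      have := congrArg (A σ) hg
      rw [map_sum, map_zero] at this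
      rw [← this]
      refine Finset.sum_congr rfl fun i _ => ?_
      rw [hAapp, hsmul, hfix]
    -- trace relation
    have h2 : ∀ (c : K) (i), Algebra.trace k K (c * g i) = 0 := by
      intro c
      have h3 : (∑ i, (∑ σ : K ≃ₐ[k] K, σ (c * g i)) • ((b i : W) : V)) = 0 := by
        have h4 : (∑ σ : K ≃ₐ[k] K, σ c • (∑ i, σ (g i) • ((b i : W) : V))) = 0 := by
          simp [h1]
        calc (∑ i, (∑ σ : K ≃ₐ[k] K, σ (c * g i)) • ((b i : W) : V))
            = ∑ i, ∑ σ : K ≃ₐ[k] K, σ (c * g i) • ((b i : W) : V) := by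
              simp [Finset.sum_smul]
          _ = ∑ σ : K ≃ₐ[k] K, ∑ i, σ (c * g i) • ((b i : W) : V) := Finset.sum_comm
          _ = ∑ σ : K ≃ₐ[k] K, σ c • (∑ i, σ (g i) • ((b i : W) : V)) := by
              refine Finset.sum_congr rfl fun σ _ => ?_
              rw [Finset.smul_sum]
              exact Finset.sum_congr rfl fun i _ => by rw [map_mul, smul_smul]
          _ = 0 := h4
      have h5 : (∑ i, Algebra.trace k K (c * g i) • ((b i : W) : V)) = 0 := by
        rw [← h3]
        refine Finset.sum_congr rfl fun i _ => ?_
        rw [← trace_eq_sum_automorphisms, algebraMap_smul]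
      have h6 : (∑ i, Algebra.trace k K (c * g i) • b i) = 0 := by
        have : ((∑ i, Algebra.trace k K (c * g i) • b i : W) : V) = 0 := by
          push_cast
          exact h5
        exact_mod_cast this
      exact Fintype.linearIndependent_iff.mp b.linearIndependent _ h6
    intro i
    have := (_root_.traceForm_nondegenerate k K).1 (g i) (fun c => ?_)
    · exact this
    · rw [Algebra.traceForm_apply, mul_comm]
      exact h2 c i
  -- spanning
  have hspan : Submodule.span K (W : Set V) = ⊤ := by
    rw [Submodule.eq_top_iff']
    intro v
    set U := Submodule.span K (W : Set V) with hU
    -- characters are linearly independent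
    have hLIchar : LinearIndependent K
        (fun σ : K ≃ₐ[k] K => ((σ : K →ₐ[k] K) : K →* K) : _ → K → K) := by
      refine (linearIndependent_monoidHom K K).comp _ ?_
      intro σ τ h
      ext x
      exact DFunLike.congr_fun h x
    have hq : ∀ σ : K ≃ₐ[k] K, U.mkQ (ρ σ v) = 0 := by
      have hrel : ∀ c : K, (∑ σ : K ≃ₐ[k] K, σ c • U.mkQ (ρ σ v)) = 0 := by
        intro c
        have : U.mkQ (∑ σ : K ≃ₐ[k] K, σ c • ρ σ v) = 0 := by
          rw [Submodule.mkQ_apply, Submodule.Quotient.mk_eq_zero]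
          exact Submodule.subset_span (hyW c v)
        rw [← this, map_sum]
        simp
      intro σ
      rw [← Module.forall_dual_apply_eq_zero_iff K]
      intro φ
      refine Fintype.linearIndependent_iff.mp hLIchar
        (fun σ => φ (U.mkQ (ρ σ v))) ?_ σ
      funext c
      have hφ := congrArg φ (hrel c)
      rw [map_sum, map_zero] at hφ
      simp only [Finset.sum_apply, Pi.smul_apply, Pi.zero_apply, smul_eq_mul]
      rw [← hφ]
      refine Finset.sum_congr rfl fun σ' _ => ?_
      rw [map_smul, smul_eq_mul, mul_comm]
      rfl
    have := hq 1
    rw [hone, Submodule.mkQ_apply, Submodule.Quotient.mk_eq_zero] at this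
    exact this
  -- basis of V over K
  have hspan' : ⊤ ≤ Submodule.span K (Set.range fun i => ((b i : W) : V)) := by
    rw [← hspan]
    rw [Submodule.span_le]
    intro w hw
    have hrepr := b.sum_repr ⟨w, hw⟩
    have : w = ∑ i, b.repr ⟨w, hw⟩ i • ((b i : W) : V) := by
      conv_lhs => rw [show w = ((⟨w, hw⟩ : W) : V) from rfl, ← hrepr]
      push_cast
      rfl
    rw [this]
    refine Submodule.sum_mem _ fun i _ => ?_
    exact Submodule.smul_of_tower_mem _ _
      (Submodule.subset_span ⟨i, rfl⟩)
  let bV : Module.Basis (Fin (Module.finrank k W)) K V := Module.Basis.mk hLI hspan'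
  let e : (K ⊗[k] W) ≃ₗ[K] V := (b.baseChange K).equiv bV (Equiv.refl _)
  have heb : ∀ i, e (1 ⊗ₜ[k] (b i : W)) = ((b i : W) : V) := by
    intro i
    have := (b.baseChange K).equiv_apply (i := i) bV (Equiv.refl _)
    rw [Module.Basis.baseChange_apply] at this
    rw [this]
    simp [bV, Module.Basis.mk_apply]
  have hcomm : ∀ (r : k) (c : K) (x : V), r • c • x = c • r • x := fun r c x => by
    rw [← algebraMap_smul K r x, ← algebraMap_smul K r (c • x), smul_smul, smul_smul, mul_comm]
  have he : ∀ (c : K) (v : W), e (c ⊗ₜ[k] (v : W)) = c • (v : V) := by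
    intro c v
    let E : (K ⊗[k] W) →ₗ[k] V :=
      ((e.restrictScalars k : (K ⊗[k] W) ≃ₗ[k] V) : (K ⊗[k] W) →ₗ[k] V)
    have hEe : ∀ x, E x = e x := fun _ => rfl
    have hrepr := b.sum_repr v
    have h1 : c ⊗ₜ[k] (v : W) = ∑ i, b.repr v i • (c ⊗ₜ[k] ((b i : W))) := by
      conv_lhs => rw [← hrepr]
      rw [TensorProduct.tmul_sum]
      simp [TensorProduct.tmul_smul]
    have h3 : ∀ i, e (c ⊗ₜ[k] ((b i : W))) = c • ((b i : W) : V) := by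
      intro i
      have h4 : (c ⊗ₜ[k] ((b i : W)) : K ⊗[k] W) = c • (1 ⊗ₜ[k] ((b i : W))) := by
        rw [TensorProduct.smul_tmul', smul_eq_mul, mul_one]
      rw [h4, map_smul, heb]
    have h2 : e (c ⊗ₜ[k] (v : W)) = ∑ i, b.repr v i • e (c ⊗ₜ[k] ((b i : W))) := by
      rw [h1, ← hEe, map_sum]
      exact Finset.sum_congr rfl fun i _ => by rw [map_smul, hEe]
    rw [h2]
    conv_rhs => rw [← hrepr]
    push_cast
    rw [Finset.smul_sum]
    refine Finset.sum_congr rfl fun i _ => ?_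
    rw [h3]
    exact hcomm _ _ _
  refine ⟨e, he, fun c d v w => ?_⟩
  rw [he, he, map_smul, map_smul, LinearMap.smul_apply, smul_eq_mul, smul_eq_mul]
  ring
end
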